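/- Let p be an odd prime, let c : ℕ → 𝔽_p be the p-Cantor sequence and let s : ℕ → 𝔽_p be the p-Singer sequence. Then in the formal power series ring 𝔽_p[[X]], one has (∑_{i≥0} c(i)·X^i) · (∑_{i≥0} s(i)·X^i) = 1. (In the language of Laurent series in t^{−1}, the Laurent series of the p-Cantor and p-Singer sequences are multiplicative inverses of one another.) -/

import Mathlib

open PowerSeries Finset

section Psi

variable {R : Type*} [CommRing R]

/-- The "stretch" operator on power series: `psi k F = F(X^k)`. -/
noncomputable def psi (k : ℕ) (F : PowerSeries R) : PowerSeries R :=
  PowerSeries.mk fun m => if k ∣ m then PowerSeries.coeff (m / k) F else 0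

lemma coeff_psi (k : ℕ) (F : PowerSeries R) (m : ℕ) :
    PowerSeries.coeff m (psi k F) = if k ∣ m then PowerSeries.coeff (m / k) F else 0 := by
  simp [psi]

lemma psi_one (k : ℕ) (hk : 0 < k) : psi k (1 : PowerSeries R) = 1 := by
  ext m
  rw [coeff_psi, PowerSeries.coeff_one, PowerSeries.coeff_one]
  by_cases h : k ∣ m
  · rw [if_pos h]
    obtain ⟨t, rfl⟩ := h
    rw [Nat.mul_div_cancel_left t hk]
    rcases eq_or_ne t 0 with rfl | ht
    · simp
    · rw [if_neg ht, if_neg (by simp [hk.ne', ht])]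
  · rw [if_neg h, if_neg (by rintro rfl; exact h (dvd_zero k))]

lemma psi_add (k : ℕ) (F G : PowerSeries R) : psi k (F + G) = psi k F + psi k G := by
  ext m
  simp only [coeff_psi, map_add]
  split_ifs <;> simp

lemma psi_mul (k : ℕ) (hk : 0 < k) (F G : PowerSeries R) :
    psi k (F * G) = psi k F * psi k G := by
  ext m
  rw [PowerSeries.coeff_mul, coeff_psi]
  by_cases hm : k ∣ m
  · rw [if_pos hm, PowerSeries.coeff_mul]
    obtain ⟨q, rfl⟩ := hm
    rw [Nat.mul_div_cancel_left q hk]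
    have hinj : Function.Injective (fun y : ℕ × ℕ => (k * y.1, k * y.2)) := by
      intro a b h
      simp only [Prod.mk.injEq] at h
      exact Prod.ext (Nat.eq_of_mul_eq_mul_left hk h.1) (Nat.eq_of_mul_eq_mul_left hk h.2)
    have hsub : (Finset.HasAntidiagonal.antidiagonal q).map ⟨_, hinj⟩ ⊆ Finset.HasAntidiagonal.antidiagonal (k * q) := by
      intro x hx
      simp only [Finset.mem_map, Finset.HasAntidiagonal.mem_antidiagonal, Function.Embedding.coeFn_mk] at hx ⊢
      obtain ⟨y, hy, rfl⟩ := hx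
      rw [← Nat.mul_add, hy]
    have hzero : ∀ x ∈ Finset.HasAntidiagonal.antidiagonal (k * q),
        x ∉ (Finset.HasAntidiagonal.antidiagonal q).map ⟨_, hinj⟩ →
        PowerSeries.coeff x.1 (psi k F) * PowerSeries.coeff x.2 (psi k G) = 0 := by
      intro x hx hxs
      rw [Finset.HasAntidiagonal.mem_antidiagonal] at hx
      by_cases h1 : k ∣ x.1
      · by_cases h2 : k ∣ x.2
        · exfalso
          apply hxs
          simp only [Finset.mem_map, Finset.HasAntidiagonal.mem_antidiagonal, Function.Embedding.coeFn_mk]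
          refine ⟨(x.1 / k, x.2 / k), ?_, ?_⟩
          · have h3 : k * (x.1 / k) + k * (x.2 / k) = k * q := by
              rw [Nat.mul_div_cancel' h1, Nat.mul_div_cancel' h2, hx]
            exact Nat.eq_of_mul_eq_mul_left hk (by rw [Nat.mul_add, h3])
          · simp [Nat.mul_div_cancel' h1, Nat.mul_div_cancel' h2]
        · rw [coeff_psi k G x.2, if_neg h2, mul_zero]
      · rw [coeff_psi k F x.1, if_neg h1, zero_mul]
    rw [← Finset.sum_subset hsub hzero, Finset.sum_map]
    apply Finset.sum_congr rfl
    intro y hy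
    simp only [Function.Embedding.coeFn_mk]
    rw [coeff_psi k F, if_pos ⟨y.1, rfl⟩, Nat.mul_div_cancel_left _ hk,
      coeff_psi k G, if_pos ⟨y.2, rfl⟩, Nat.mul_div_cancel_left _ hk]
  · rw [if_neg hm]
    symm
    apply Finset.sum_eq_zero
    intro x hx
    rw [Finset.HasAntidiagonal.mem_antidiagonal] at hx
    by_cases h1 : k ∣ x.1
    · by_cases h2 : k ∣ x.2
      · exact absurd (hx ▸ Nat.dvd_add h1 h2) hm
      · rw [coeff_psi k G x.2, if_neg h2, mul_zero]
    · rw [coeff_psi k F x.1, if_neg h1, zero_mul]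

lemma psi_pow (k : ℕ) (hk : 0 < k) (F : PowerSeries R) (n : ℕ) :
    psi k (F ^ n) = psi k F ^ n := by
  induction n with
  | zero => simpa using psi_one k hk
  | succ n ih => rw [pow_succ, psi_mul k hk, ih, pow_succ]

lemma psi_X (k : ℕ) (hk : 0 < k) : psi k (PowerSeries.X : PowerSeries R) = X ^ k := by
  ext m
  rw [coeff_psi, PowerSeries.coeff_X_pow]
  by_cases h : k ∣ m
  · rw [if_pos h]
    obtain ⟨t, rfl⟩ := h
    rw [Nat.mul_div_cancel_left t hk, PowerSeries.coeff_X]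
    by_cases ht : t = 1
    · simp [ht]
    · rw [if_neg ht, if_neg
        (fun hkm => ht (Nat.eq_of_mul_eq_mul_left hk (hkm.trans (Nat.mul_one k).symm)))]
  · rw [if_neg h, if_neg (by rintro rfl; exact h dvd_rfl)]

lemma psi_psi (a b : ℕ) (ha : 0 < a) (hb : 0 < b) (F : PowerSeries R) :
    psi a (psi b F) = psi (a * b) F := by
  ext m
  rw [coeff_psi]
  by_cases h1 : a ∣ m
  · rw [if_pos h1, coeff_psi, coeff_psi]
    by_cases h2 : b ∣ m / a
    · rw [if_pos h2, if_pos, Nat.div_div_eq_div_mul]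
      obtain ⟨t, ht⟩ := h1
      obtain ⟨u, hu⟩ := h2
      rw [ht, Nat.mul_div_cancel_left t ha] at hu
      exact ⟨u, by rw [ht, hu]; ring⟩
    · rw [if_neg h2, if_neg]
      intro hab
      apply h2
      obtain ⟨u, rfl⟩ := hab
      rw [show a * b * u = a * (b * u) by ring, Nat.mul_div_cancel_left _ ha]
      exact ⟨u, rfl⟩
  · rw [if_neg h1, coeff_psi, if_neg (fun hab => h1 (dvd_trans ⟨b, rfl⟩ hab))]

/-- A power series fixed by `psi k` (for `k ≥ 2`) with constant term 1 equals 1. -/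
lemma psi_fixed_eq_one (k : ℕ) (hk : 2 ≤ k) (F : PowerSeries R)
    (hF : F = psi k F) (h0 : PowerSeries.coeff 0 F = 1) : F = 1 := by
  ext n
  induction n using Nat.strong_induction_on with
  | _ n ih =>
    rcases Nat.eq_zero_or_pos n with rfl | hn
    · rw [h0, PowerSeries.coeff_one, if_pos rfl]
    · rw [PowerSeries.coeff_one, if_neg hn.ne']
      conv_lhs => rw [hF]
      rw [coeff_psi]
      by_cases h : k ∣ n
      · rw [if_pos h]
        have h1 : n / k < n := Nat.div_lt_self hn (by omega)
        have h2 : 0 < n / k := Nat.div_pos (Nat.le_of_dvd hn h) (by omega)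
        rw [ih _ h1, PowerSeries.coeff_one, if_neg h2.ne']
      · rw [if_neg h]

/-- Translate a coefficient-wise recursion into a power series functional equation. -/
lemma mk_eq_mul_psi (k : ℕ) (hk : 0 < k) (f g : ℕ → R) (B : PowerSeries R)
    (hrec : ∀ n i : ℕ, i < k → f (k * n + i) = PowerSeries.coeff i B * g n)
    (hB : ∀ i : ℕ, k ≤ i → PowerSeries.coeff i B = 0) :
    PowerSeries.mk f = B * psi k (PowerSeries.mk g) := by
  ext m
  rw [PowerSeries.coeff_mk, PowerSeries.coeff_mul]
  have hm : k * (m / k) + m % k = m := Nat.div_add_mod m k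
  rw [← hm, hrec (m / k) (m % k) (Nat.mod_lt m hk)]
  rw [Finset.sum_eq_single (m % k, k * (m / k))]
  · simp only [PowerSeries.coeff_mk, coeff_psi]
    rw [if_pos ⟨m / k, rfl⟩, Nat.mul_div_cancel_left _ hk]
  · intro x hx hne
    rw [Finset.HasAntidiagonal.mem_antidiagonal] at hx
    by_cases h1 : x.1 < k
    · rw [coeff_psi]
      by_cases h2 : k ∣ x.2
      · exfalso
        apply hne
        obtain ⟨t, ht⟩ := h2
        have hmod : (x.1 + x.2) % k = x.1 % k := by rw [ht, Nat.add_mul_mod_self_left]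
        rw [Nat.mod_eq_of_lt h1] at hmod
        have h4 : (x.1 + x.2) % k = (k * (m / k) + m % k) % k := by rw [hx]
        rw [hmod, hm] at h4
        have hx1 : x.1 = m % k := by omega
        have hx2 : x.2 = k * (m / k) := by omega
        exact Prod.ext hx1 hx2
      · rw [if_neg h2, mul_zero]
    · rw [hB x.1 (by omega), zero_mul]
  · intro h
    exact absurd (Finset.HasAntidiagonal.mem_antidiagonal.mpr (by omega)) h

/-- Coefficients of `(1+X)^e` in a power series ring. -/
lemma coeff_one_add_X_pow' (e i : ℕ) :
    PowerSeries.coeff i ((1 + PowerSeries.X) ^ e) = (e.choose i : R) := by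
  have h : (((1 + Polynomial.X : Polynomial R) ^ e : Polynomial R) : PowerSeries R) =
      (1 + PowerSeries.X) ^ e := by
    rw [Polynomial.coe_pow, Polynomial.coe_add, Polynomial.coe_one, Polynomial.coe_X]
  rw [← h, Polynomial.coeff_coe, Polynomial.coeff_one_add_X_pow]

lemma one_add_X_sq_pow_eq (e : ℕ) :
    ((1 + PowerSeries.X ^ 2 : PowerSeries R)) ^ e = psi 2 ((1 + PowerSeries.X) ^ e) := by
  rw [psi_pow 2 (by norm_num), psi_add, psi_one 2 (by norm_num), psi_X 2 (by norm_num)]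

/-- Coefficients of `(1+X^2)^e`. -/
lemma coeff_one_add_X_sq_pow (e i : ℕ) :
    PowerSeries.coeff i ((1 + PowerSeries.X ^ 2 : PowerSeries R) ^ e) =
      if i % 2 = 0 then (e.choose (i / 2) : R) else 0 := by
  rw [one_add_X_sq_pow_eq, coeff_psi, coeff_one_add_X_pow']
  by_cases h : 2 ∣ i
  · rw [if_pos h, if_pos (by omega)]
  · rw [if_neg h, if_neg (by omega)]

end Psi

/-- the power series of the p-Cantor and p-Singer sequences
are multiplicative inverses of one another in 𝔽_p[[X]]. -/
theorem cantor_singer_inverse (p : ℕ) (hp : p.Prime) (hodd : Odd p)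
    (c σ s : ℕ → ZMod p)
    (hc0 : c 0 = 1)
    (hc : ∀ n i : ℕ, i < p →
      c (p * n + i) =
        (if i % 2 = 0 then ((((p - 1) / 2).choose (i / 2) : ℕ) : ZMod p) else 0) * c n)
    (hσ0 : σ 0 = 1)
    (hσ : ∀ n i : ℕ, i < p →
      σ (p * n + i) = ((((p - 1) / 2).choose i : ℕ) : ZMod p) * σ n)
    (hs : ∀ n i : ℕ, i < 2 * p →
      s (2 * p * n + i) =
        (if i % 2 = 0 then ((((p - 1) / 2 + 1).choose (i / 2) : ℕ) : ZMod p) else 0) * σ n) :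
    PowerSeries.mk c * PowerSeries.mk s = 1 := by
  haveI : Fact p.Prime := ⟨hp⟩
  set p₂ := (p - 1) / 2 with hp₂
  have hp3 : 3 ≤ p := by
    rcases hodd with ⟨k, hk⟩
    have := hp.two_le
    omega
  have hpeq : 2 * p₂ + 1 = p := by
    rcases hodd with ⟨k, hk⟩
    omega
  have hp0 : 0 < p := by omega
  have h2pos : (0:ℕ) < 2 := by norm_num
  -- functional equation for c
  have hC : PowerSeries.mk c =
      (1 + PowerSeries.X ^ 2 : PowerSeries (ZMod p)) ^ p₂ * psi p (PowerSeries.mk c) := by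
    apply mk_eq_mul_psi p hp0
    · intro n i hi
      rw [coeff_one_add_X_sq_pow]
      exact hc n i hi
    · intro i hi
      rw [coeff_one_add_X_sq_pow]
      split_ifs with h
      · rw [Nat.choose_eq_zero_of_lt (by omega), Nat.cast_zero]
      · rfl
  -- functional equation for σ
  have hSig : PowerSeries.mk σ =
      (1 + PowerSeries.X : PowerSeries (ZMod p)) ^ p₂ * psi p (PowerSeries.mk σ) := by
    apply mk_eq_mul_psi p hp0
    · intro n i hi
      rw [coeff_one_add_X_pow']
      exact hσ n i hi
    · intro i hi
      rw [coeff_one_add_X_pow', Nat.choose_eq_zero_of_lt (by omega), Nat.cast_zero]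
  -- functional equation for s
  have hS : PowerSeries.mk s =
      (1 + PowerSeries.X ^ 2 : PowerSeries (ZMod p)) ^ (p₂ + 1) *
        psi (2 * p) (PowerSeries.mk σ) := by
    apply mk_eq_mul_psi (2 * p) (by omega)
    · intro n i hi
      rw [coeff_one_add_X_sq_pow]
      exact hs n i hi
    · intro i hi
      rw [coeff_one_add_X_sq_pow]
      split_ifs with h
      · rw [Nat.choose_eq_zero_of_lt (by omega), Nat.cast_zero]
      · rfl
  set Sig2 : PowerSeries (ZMod p) := psi 2 (PowerSeries.mk σ) with hSig2def
  -- Sig2 functional equation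
  have hSig2 : Sig2 =
      (1 + PowerSeries.X ^ 2 : PowerSeries (ZMod p)) ^ p₂ * psi p Sig2 := by
    rw [hSig2def]
    conv_lhs => rw [hSig]
    rw [psi_mul 2 h2pos, psi_pow 2 h2pos, psi_add, psi_one 2 h2pos, psi_X 2 h2pos,
      psi_psi 2 p h2pos hp0, show 2 * p = p * 2 from Nat.mul_comm 2 p,
      ← psi_psi p 2 hp0 h2pos]
  have hpsi2p : psi (2 * p) (PowerSeries.mk σ) = psi p Sig2 := by
    rw [hSig2def, psi_psi p 2 hp0 h2pos, Nat.mul_comm p 2]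
  -- characteristic p
  haveI : CharP (PowerSeries (ZMod p)) p :=
    charP_of_injective_ringHom (f := (PowerSeries.C : ZMod p →+* PowerSeries (ZMod p)))
      (fun a b h => by simpa using congrArg (PowerSeries.coeff 0) h) p
  have hAp : (1 + PowerSeries.X ^ 2 : PowerSeries (ZMod p)) ^ p =
      psi p (1 + PowerSeries.X ^ 2 : PowerSeries (ZMod p)) := by
    rw [add_pow_char, one_pow, psi_add, psi_one p hp0, psi_pow p hp0, psi_X p hp0,
      ← pow_mul, ← pow_mul]
    ring
  -- The product F := C * S satisfies F = psi p F
  set F := PowerSeries.mk c * PowerSeries.mk s with hF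
  have hexp : F = (1 + PowerSeries.X ^ 2 : PowerSeries (ZMod p)) ^ p *
      psi p (PowerSeries.mk c * Sig2) := by
    rw [hF]
    conv_lhs => rw [hC, hS, hpsi2p]
    rw [psi_mul p hp0, show ((1 : PowerSeries (ZMod p)) + PowerSeries.X ^ 2) ^ p =
      ((1 : PowerSeries (ZMod p)) + PowerSeries.X ^ 2) ^ (2 * p₂ + 1) by rw [hpeq]]
    ring
  have hACS : (1 + PowerSeries.X ^ 2 : PowerSeries (ZMod p)) *
      (PowerSeries.mk c * Sig2) = F := by
    conv_lhs => rw [hC, hSig2]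
    rw [hexp, psi_mul p hp0, show ((1 : PowerSeries (ZMod p)) + PowerSeries.X ^ 2) ^ p =
      ((1 : PowerSeries (ZMod p)) + PowerSeries.X ^ 2) ^ (2 * p₂ + 1) by rw [hpeq]]
    ring
  have key : F = psi p F :=
    calc F = (1 + PowerSeries.X ^ 2 : PowerSeries (ZMod p)) ^ p *
          psi p (PowerSeries.mk c * Sig2) := hexp
      _ = psi p (1 + PowerSeries.X ^ 2 : PowerSeries (ZMod p)) *
          psi p (PowerSeries.mk c * Sig2) := by rw [hAp]
      _ = psi p ((1 + PowerSeries.X ^ 2 : PowerSeries (ZMod p)) *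
          (PowerSeries.mk c * Sig2)) := (psi_mul p hp0 _ _).symm
      _ = psi p F := by rw [hACS]
  -- constant coefficients
  have hs0 : s 0 = 1 := by
    have h := hs 0 0 (by omega)
    simpa [hσ0] using h
  have h0 : PowerSeries.coeff 0 F = 1 := by
    rw [hF, PowerSeries.coeff_zero_eq_constantCoeff, map_mul]
    simp [hc0, hs0]
  exact psi_fixed_eq_one p hp.two_le F key h0
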